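/- Let $S$ be a right LCM monoid with generalised scale $N$ that is right cancellative, and suppose there exist $a, b \in S_c$ with $a \neq b$ such that $\alpha_a = \alpha_b$ as maps on $S/_\sim$ (i.e., $[as] = [bs]$ for all $s \in S$). Then $S$ is not core regular; in fact $|F_n^{a,b} \setminus A_n^{a,b}| = n$ for every $n \in N(S)$. -/
import Mathlib


/-- The principal right ideal `sS`. -/
def rIdeal {S : Type*} [Monoid S] (s : S) : Set S := {z | ∃ x, z = s * x}

/-- `S` is left cancellative. -/
def LeftCanc (S : Type*) [Monoid S] : Prop := ∀ a b c : S, a * b = a * c → b = c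

/-- `s` and `t` admit a right common multiple. -/
def Cap {S : Type*} [Monoid S] (s t : S) : Prop := (rIdeal s ∩ rIdeal t).Nonempty

/-- Any two elements with a right common multiple have a right LCM. -/
def IsRightLCM (S : Type*) [Monoid S] : Prop :=
  ∀ s t : S, Cap s t → ∃ r : S, rIdeal s ∩ rIdeal t = rIdeal r

/-- The core `S_c` of a monoid. -/
def core (S : Type*) [Monoid S] : Set S := {a | ∀ s : S, Cap a s}

/-- Core equivalence: `s ∼ t` iff `s a = t b` for some `a, b` in the core. -/
def coreEquiv {S : Type*} [Monoid S] (s t : S) : Prop :=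
  ∃ a ∈ core S, ∃ b ∈ core S, s * a = t * b

/-- The core equivalence class of `s` inside `N⁻¹(N s)`. -/
def classOf {S : Type*} [Monoid S] (N : S → ℕ) (s : S) : Set S :=
  {t | N t = N s ∧ coreEquiv s t}

/-- The set of core equivalence classes of elements of `N⁻¹(n)`. -/
def classSet {S : Type*} [Monoid S] (N : S → ℕ) (n : ℕ) : Set (Set S) :=
  {C | ∃ s, N s = n ∧ C = classOf N s}

/-- `T` is a transversal for `N⁻¹(n)/∼`. -/
def IsTransversal {S : Type*} [Monoid S] (N : S → ℕ) (n : ℕ) (T : Finset S) : Prop :=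
  (∀ t ∈ T, N t = n) ∧ ∀ s : S, N s = n → ∃! t, t ∈ T ∧ coreEquiv s t

/-- `T` is an accurate foundation set. -/
def IsAccurateFoundationSet {S : Type*} [Monoid S] (T : Finset S) : Prop :=
  (∀ s : S, ∃ f ∈ T, Cap s f) ∧ ∀ f ∈ T, ∀ f' ∈ T, f ≠ f' → ¬ Cap f f'

/-- A generalised scale on a right LCM monoid. -/
def IsGenScale {S : Type*} [Monoid S] (N : S →* ℕ) : Prop :=
  (∀ s, 0 < N s) ∧ (∃ s, N s ≠ 1) ∧
  (∀ n ∈ Set.range ⇑N, (classSet ⇑N n).ncard = n) ∧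
  (∀ n ∈ Set.range ⇑N, ∀ T : Finset S, IsTransversal ⇑N n T → IsAccurateFoundationSet T)

/-- `[s]` is an absorbing fixed point for the pair `(a,b)`: `a s c = b s c` for some core `c`. -/
def Absorbing {S : Type*} [Monoid S] (a b s : S) : Prop :=
  ∃ c ∈ core S, a * s * c = b * s * c

/-- `[s]` is a fixed point for the pair `(a,b)`: `a s c = b s d` for some core `c, d`. -/
def FixedBy {S : Type*} [Monoid S] (a b s : S) : Prop :=
  ∃ c ∈ core S, ∃ d ∈ core S, a * s * c = b * s * d

/-- The set `A_n^{a,b}` of absorbing classes at level `n`. -/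
def Aset {S : Type*} [Monoid S] (N : S → ℕ) (a b : S) (n : ℕ) : Set (Set S) :=
  {C | ∃ s, N s = n ∧ Absorbing a b s ∧ C = classOf N s}

/-- The set `F_n^{a,b}` of fixed classes at level `n`. -/
def Fset {S : Type*} [Monoid S] (N : S → ℕ) (a b : S) (n : ℕ) : Set (Set S) :=
  {C | ∃ s, N s = n ∧ FixedBy a b s ∧ C = classOf N s}

/-- If `S` is right cancellative and `α_a = α_b` for distinct core elements `a ≠ b`, then
`|F_n^{a,b} \ A_n^{a,b}| = n` for every `n ∈ N(S)`; in particular `S` is not core regular. -/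
theorem not_core_regular (S : Type*) [Monoid S] (hlc : LeftCanc S)
    (hlcm : IsRightLCM S) (hrc : ∀ s t u : S, s * u = t * u → s = t)
    (N : S →* ℕ) (hN : IsGenScale N) (a b : S) (ha : a ∈ core S) (hb : b ∈ core S)
    (hab : a ≠ b) (halpha : ∀ s : S, coreEquiv (a * s) (b * s)) :
    (∀ n ∈ Set.range ⇑N, (Fset ⇑N a b n \ Aset ⇑N a b n).ncard = n) ∧
    ¬ Filter.Tendsto
        (fun n : {n : ℕ // n ∈ Set.range ⇑N} =>
          (((Fset ⇑N a b ↑n \ Aset ⇑N a b ↑n).ncard : ℝ) / (n : ℕ)))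
        Filter.atTop (nhds 0) := by
  have hApos : ∀ n ∈ Set.range ⇑N, 0 < n := by
    rintro n ⟨s, rfl⟩; exact hN.1 s
  have hFA : ∀ n ∈ Set.range ⇑N, (Fset ⇑N a b n \ Aset ⇑N a b n).ncard = n := by
    intro n hn
    have hA : Aset ⇑N a b n = ∅ := by
      ext C
      simp only [Aset, Set.mem_setOf_eq, Set.mem_empty_iff_false, iff_false]
      rintro ⟨s, _, ⟨c, hc, hcs⟩, _⟩
      exact hab (hrc a b s (hrc (a * s) (b * s) c hcs))
    have hF : Fset ⇑N a b n = classSet ⇑N n := by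
      ext C
      constructor
      · rintro ⟨s, hs, _, rfl⟩; exact ⟨s, hs, rfl⟩
      · rintro ⟨s, hs, rfl⟩
        refine ⟨s, hs, ?_, rfl⟩
        obtain ⟨c, hc, d, hd, h⟩ := halpha s
        exact ⟨c, hc, d, hd, h⟩
    rw [hF, hA, Set.diff_empty]
    exact hN.2.2.1 n hn
  refine ⟨hFA, ?_⟩
  intro htend
  have hne : Nonempty {n : ℕ // n ∈ Set.range ⇑N} := ⟨⟨N 1, ⟨1, rfl⟩⟩⟩
  have heq : (fun n : {n : ℕ // n ∈ Set.range ⇑N} =>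
      (((Fset ⇑N a b ↑n \ Aset ⇑N a b ↑n).ncard : ℝ) / (n : ℕ))) = fun _ => (1 : ℝ) := by
    funext n
    rw [hFA n n.2]
    have h0 : (0 : ℝ) < ((n : ℕ) : ℝ) := by exact_mod_cast hApos n n.2
    field_simp
  rw [heq] at htend
  have h1 : (1 : ℝ) = 0 := tendsto_nhds_unique tendsto_const_nhds htend
  norm_num at h1
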